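/- Every metrizable topological space of density at most 𝔠 (the cardinality of the continuum) has countable separation. -/

import Mathlib

open Topology Set

universe u v

/-- `f` is quasicontinuous at `x`. -/
def QuasiContinuousAt {X : Type*} {Y : Type*} [TopologicalSpace X] [TopologicalSpace Y]
    (f : X → Y) (x : X) : Prop :=
  ∀ Ox ∈ nhds x, ∀ Oy ∈ nhds (f x),
    ∃ U : Set X, IsOpen U ∧ U.Nonempty ∧ U ⊆ Ox ∧ f '' U ⊆ Oy

/-- `f` is quasicontinuous. -/
def QuasiContinuous {X Y : Type*} [TopologicalSpace X] [TopologicalSpace Y] (f : X → Y) : Prop :=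
  ∀ x, QuasiContinuousAt f x

/-- The set of continuity points of a map. -/
def ContinuityPoints {Z X : Type*} [TopologicalSpace Z] [TopologicalSpace X] (f : Z → X) :
    Set Z :=
  {z | ContinuousAt f z}

/-- A multivalued map (represented as `Φ : Z → Set X`) is usco if it has nonempty compact
values and is upper semicontinuous. -/
def IsUsco {Z X : Type*} [TopologicalSpace Z] [TopologicalSpace X] (Φ : Z → Set X) : Prop :=
  (∀ z, (Φ z).Nonempty) ∧ (∀ z, IsCompact (Φ z)) ∧
    ∀ U : Set X, IsOpen U → IsOpen {z | Φ z ⊆ U}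

/-- A minimal usco map. -/
def IsMinimalUsco {Z X : Type*} [TopologicalSpace Z] [TopologicalSpace X] (Φ : Z → Set X) :
    Prop :=
  IsUsco Φ ∧ ∀ Ψ : Z → Set X, IsUsco Ψ → (∀ z, Ψ z ⊆ Φ z) → Ψ = Φ

/-- `Φ` is single-valued at `z`. -/
def SingleValuedAt {Z X : Type*} (Φ : Z → Set X) (z : Z) : Prop := ∃ x, Φ z = {x}

/-- A class of topological spaces (in universe `u`). -/
def SpaceClass : Type (u + 1) := ∀ Z : Type u, TopologicalSpace Z → Prop

/-- All members of the class are Baire spaces. -/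
def IsBaireClass (P : SpaceClass.{u}) : Prop :=
  ∀ (Z : Type u) [tZ : TopologicalSpace Z], P Z tZ → BaireSpace Z

/-- The class is closed under taking open subspaces. -/
def ClosedUnderOpenSubspaces (P : SpaceClass.{u}) : Prop :=
  ∀ (Z : Type u) [tZ : TopologicalSpace Z], P Z tZ →
    ∀ U : Set Z, IsOpen U → P ↥U inferInstance

/-- The class is closed under taking dense `Gδ`-subspaces. -/
def ClosedUnderDenseGdelta (P : SpaceClass.{u}) : Prop :=
  ∀ (Z : Type u) [tZ : TopologicalSpace Z], P Z tZ →
    ∀ S : Set Z, Dense S → IsGδ S → P ↥S inferInstance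

/-- The class is closed under taking dense Baire subspaces. -/
def ClosedUnderDenseBaire (P : SpaceClass.{u}) : Prop :=
  ∀ (Z : Type u) [tZ : TopologicalSpace Z], P Z tZ →
    ∀ S : Set Z, Dense S → BaireSpace ↥S → P ↥S inferInstance

/-- `X` is `𝒞`-Piotrowski: every quasicontinuous map from a nonempty member of the class `𝒞`
to `X` has a continuity point. -/
def IsPiotrowskiFor (P : SpaceClass.{u}) (X : Type v) [TopologicalSpace X] : Prop :=
  ∀ (Z : Type u) [tZ : TopologicalSpace Z], P Z tZ → Nonempty Z →
    ∀ f : Z → X, QuasiContinuous f → ∃ z, ContinuousAt f z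

/-- `X` is strong `𝒞`-Piotrowski: for every quasicontinuous map from a member of `𝒞` to `X`
the set of continuity points is comeager. -/
def IsStrongPiotrowskiFor (P : SpaceClass.{u}) (X : Type v) [TopologicalSpace X] : Prop :=
  ∀ (Z : Type u) [tZ : TopologicalSpace Z], P Z tZ →
    ∀ f : Z → X, QuasiContinuous f → ContinuityPoints f ∈ residual Z

/-- `X` is `𝒞`-Stegall. -/
def IsStegallFor (P : SpaceClass.{u}) (X : Type v) [TopologicalSpace X] : Prop :=
  ∀ (Z : Type u) [tZ : TopologicalSpace Z], P Z tZ → Nonempty Z →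
    ∀ Φ : Z → Set X, IsMinimalUsco Φ → ∃ z, SingleValuedAt Φ z

/-- `X` is strong `𝒞`-Stegall. -/
def IsStrongStegallFor (P : SpaceClass.{u}) (X : Type v) [TopologicalSpace X] : Prop :=
  ∀ (Z : Type u) [tZ : TopologicalSpace Z], P Z tZ →
    ∀ Φ : Z → Set X, IsMinimalUsco Φ → {z | SingleValuedAt Φ z} ∈ residual Z

/-- The class of all Baire spaces (in universe `u`). -/
def BaireClass : SpaceClass.{u} := fun Z tZ => @BaireSpace Z tZ

/-- `X` is Piotrowski. -/
def IsPiotrowski (X : Type v) [TopologicalSpace X] : Prop :=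
  IsPiotrowskiFor BaireClass.{u} X

/-- `d` is a metric on `X` (not necessarily related to the topology of `X`). -/
structure IsMetric {X : Type*} (d : X → X → ℝ) : Prop where
  self : ∀ x, d x x = 0
  eq_of : ∀ x y, d x y = 0 → x = y
  symm : ∀ x y, d x y = d y x
  triangle : ∀ x y z, d x z ≤ d x y + d y z

/-- `X` is fragmented by `d`: every nonempty subset has a nonempty relatively open subset of
`d`-diameter `< ε`. -/
def FragmentedBy (X : Type*) [TopologicalSpace X] (d : X → X → ℝ) : Prop :=
  ∀ ε : ℝ, 0 < ε → ∀ A : Set X, A.Nonempty →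
    ∃ V : Set X, IsOpen V ∧ (A ∩ V).Nonempty ∧ ∀ x ∈ A ∩ V, ∀ y ∈ A ∩ V, d x y < ε

/-- The topology generated by `d` is finer than the topology of `X`. -/
def MetricTopFiner (X : Type*) [TopologicalSpace X] (d : X → X → ℝ) : Prop :=
  ∀ U : Set X, IsOpen U → ∀ x ∈ U, ∃ ε : ℝ, 0 < ε ∧ {y | d x y < ε} ⊆ U

/-- `X` is fragmentable. -/
def Fragmentable (X : Type*) [TopologicalSpace X] : Prop :=
  ∃ d : X → X → ℝ, IsMetric d ∧ FragmentedBy X d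

/-- `X` is strictly fragmented by the metric `d`. -/
def StrictlyFragmentedBy (X : Type*) [TopologicalSpace X] (d : X → X → ℝ) : Prop :=
  IsMetric d ∧ FragmentedBy X d ∧ MetricTopFiner X d

/-- `X` is strictly fragmentable. -/
def StrictlyFragmentable (X : Type*) [TopologicalSpace X] : Prop :=
  ∃ d : X → X → ℝ, StrictlyFragmentedBy X d

/-- The countable family `𝒰` separates the points of `S` from the points of `Sᶜ`:
some member of the family contains exactly one point of any pair `x ∈ S`, `y ∉ S`. -/
def SeparatesFrom {K : Type*} (𝒰 : ℕ → Set K) (S : Set K) : Prop :=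
  ∀ x ∈ S, ∀ y ∈ Sᶜ, ∃ n, (x ∈ 𝒰 n ∧ y ∉ 𝒰 n) ∨ (x ∉ 𝒰 n ∧ y ∈ 𝒰 n)

/-- `X` has countable separation: some compactification `K` of `X` carries a countable family
of open sets separating the points of (the copy of) `X` from the points of `K \ X`. -/
def HasCountableSeparation (X : Type u) [TopologicalSpace X] : Prop :=
  ∃ (K : Type u) (tK : TopologicalSpace K), @CompactSpace K tK ∧ @T2Space K tK ∧
    ∃ e : X → K, @Topology.IsEmbedding X K _ tK e ∧ @DenseRange K tK X e ∧
      ∃ 𝒰 : ℕ → Set K, (∀ n, @IsOpen K tK (𝒰 n)) ∧ SeparatesFrom 𝒰 (Set.range e)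

namespace CSepAux

variable {A : Type*} {ι : Type*}

/-- Rudin/Stone "good point" predicate. -/
def ruGood (ρ : A → A → ℝ) (t : ι → A) (k n : ℕ) (z : A) (α : ι) : Prop :=
  ρ z (t α) + 3 * (1/2 : ℝ) ^ n ≤ (1/2 : ℝ) ^ k ∧
    ∀ β, WellOrderingRel β α → (1/2 : ℝ) ^ k ≤ ρ z (t β)

def ruD' (ρ : A → A → ℝ) (t : ι → A) (k n : ℕ) (Ex : Set A) (α : ι) : Set A :=
  {w | ∃ z, ruGood ρ t k n z α ∧ z ∉ Ex ∧ ρ z w < (1/2 : ℝ) ^ n}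

def ruE (ρ : A → A → ℝ) (t : ι → A) (k : ℕ) : ℕ → Set A
  | 0 => ∅
  | n + 1 => ruE ρ t k n ∪ ⋃ α, ruD' ρ t k n (ruE ρ t k n) α

def ruD (ρ : A → A → ℝ) (t : ι → A) (k n : ℕ) (α : ι) : Set A :=
  ruD' ρ t k n (ruE ρ t k n) α

lemma mem_ruE {ρ : A → A → ℝ} {t : ι → A} {k n : ℕ} {x : A} (hx : x ∈ ruE ρ t k n) :
    ∃ m, m < n ∧ ∃ α, x ∈ ruD ρ t k m α := by
  induction n with
  | zero => exact absurd hx (Set.notMem_empty x)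
  | succ n ih =>
    rw [ruE] at hx
    rcases hx with hx | hx
    · obtain ⟨m, hm, hα⟩ := ih hx; exact ⟨m, Nat.lt_succ_of_lt hm, hα⟩
    · rcases Set.mem_iUnion.mp hx with ⟨α, hα⟩
      exact ⟨n, Nat.lt_succ_self n, α, hα⟩

lemma ruD_core {ρ : A → A → ℝ} {t : ι → A}
    (hsymm : ∀ a b, ρ a b = ρ b a) (htri : ∀ a b c, ρ a c ≤ ρ a b + ρ b c)
    {k n : ℕ} {α γ : ι} (hrel : WellOrderingRel α γ) {w : A}
    (h1 : w ∈ ruD ρ t k n α) (h2 : w ∈ ruD ρ t k n γ) : False := by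
  obtain ⟨z₁, hg1, -, hz1⟩ := h1
  obtain ⟨z₂, hg2, -, hz2⟩ := h2
  have hA := hg2.2 α hrel
  have h3 : ρ z₂ (t α) ≤ ρ z₂ z₁ + ρ z₁ (t α) := htri _ _ _
  have h4 : ρ z₂ z₁ ≤ ρ z₂ w + ρ w z₁ := htri _ _ _
  have h6 : ρ w z₁ = ρ z₁ w := hsymm _ _
  have hg := hg1.1
  have hr : (0:ℝ) < (1/2 : ℝ) ^ n := by positivity
  linarith

lemma ruD_disjoint {ρ : A → A → ℝ} {t : ι → A}
    (hsymm : ∀ a b, ρ a b = ρ b a) (htri : ∀ a b c, ρ a c ≤ ρ a b + ρ b c)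
    {k n : ℕ} {α γ : ι} (hne : α ≠ γ) {w : A}
    (h1 : w ∈ ruD ρ t k n α) (h2 : w ∈ ruD ρ t k n γ) : False := by
  rcases trichotomous_of WellOrderingRel α γ with hr | hr | hr
  · exact ruD_core hsymm htri hr h1 h2
  · exact hne hr
  · exact ruD_core hsymm htri hr h2 h1

lemma ruD_diam {ρ : A → A → ℝ} {t : ι → A}
    (hsymm : ∀ a b, ρ a b = ρ b a) (htri : ∀ a b c, ρ a c ≤ ρ a b + ρ b c)
    {k n : ℕ} {α : ι} {w : A} (h : w ∈ ruD ρ t k n α) : ρ w (t α) < (1/2 : ℝ) ^ k := by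
  obtain ⟨z, hg, -, hz⟩ := h
  have h1 : ρ w (t α) ≤ ρ w z + ρ z (t α) := htri _ _ _
  have h2 : ρ w z = ρ z w := hsymm _ _
  have hr : (0:ℝ) < (1/2 : ℝ) ^ n := by positivity
  have hg1 := hg.1
  linarith

lemma ruD_cover {ρ : A → A → ℝ} {t : ι → A}
    (hself : ∀ a, ρ a a = 0)
    (hdense : ∀ a, ∀ ε : ℝ, 0 < ε → ∃ i, ρ a (t i) < ε)
    (x : A) (k : ℕ) : ∃ n α, x ∈ ruD ρ t k n α := by
  have hck : (0:ℝ) < (1/2 : ℝ) ^ k := by positivity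
  obtain ⟨i, hi⟩ := hdense x _ hck
  have hwf : WellFounded (WellOrderingRel : ι → ι → Prop) := IsWellFounded.wf
  set S : Set ι := {β | ρ x (t β) < (1/2 : ℝ) ^ k} with hSdef
  have hS : S.Nonempty := ⟨i, hi⟩
  set α := hwf.min S hS with hα
  have hαS : α ∈ S := hwf.min_mem S hS
  have hleast : ∀ β, WellOrderingRel β α → (1/2 : ℝ) ^ k ≤ ρ x (t β) := by
    intro β hβ
    by_contra hcon
    push_neg at hcon
    exact hwf.not_lt_min S (show β ∈ S from hcon) hβ
  have hgap : (0:ℝ) < ((1/2 : ℝ) ^ k - ρ x (t α)) / 3 := by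
    have : ρ x (t α) < (1/2 : ℝ) ^ k := hαS
    linarith
  obtain ⟨n, hn⟩ := exists_pow_lt_of_lt_one hgap (by norm_num : (1/2 : ℝ) < 1)
  have hgood : ruGood ρ t k n x α := ⟨by linarith, hleast⟩
  by_cases hx : x ∈ ruE ρ t k n
  · obtain ⟨m, -, β, hm⟩ := mem_ruE hx
    exact ⟨m, β, hm⟩
  · refine ⟨n, α, x, hgood, hx, ?_⟩
    rw [hself]
    positivity

theorem sep' (ρ : A → A → ℝ) (hself : ∀ a, ρ a a = 0) (hsymm : ∀ a b, ρ a b = ρ b a)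
    (htri : ∀ a b c, ρ a c ≤ ρ a b + ρ b c) (hpos : ∀ a b : A, a ≠ b → 0 < ρ a b)
    (t : ι → A) (hdense : ∀ a, ∀ ε : ℝ, 0 < ε → ∃ i, ρ a (t i) < ε)
    (c : ι → ℕ → Bool) (hc : Function.Injective c) :
    ∃ F : ℕ → Set A,
      (∀ n, ∀ a ∈ F n, ∃ ε, 0 < ε ∧ ∀ b, ρ a b < ε → b ∈ F n) ∧
      (∀ x y : A, x ≠ y → ∃ n, (x ∈ F n ∧ y ∉ F n) ∨ (x ∉ F n ∧ y ∈ F n)) := by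
  classical
  set FF : ℕ → ℕ → ℕ → Bool → Set A :=
    fun k n m b => {w | ∃ α, c α m = b ∧ w ∈ ruD ρ t k n α} with hFF
  set enc := Denumerable.eqv (ℕ × ℕ × ℕ × ℕ) with henc
  have hbd : ∀ b : Bool, decide ((bif b then (0:ℕ) else 1) = 0) = b := by decide
  refine ⟨fun j => FF (enc.symm j).1 (enc.symm j).2.1 (enc.symm j).2.2.1
      (decide ((enc.symm j).2.2.2 = 0)), ?_, ?_⟩
  · intro j a ha
    obtain ⟨α, hb, z, hg, hz, hρ⟩ := ha
    refine ⟨(1/2 : ℝ) ^ (enc.symm j).2.1 - ρ z a, by linarith, fun b hab => ⟨α, hb, z, hg, hz, ?_⟩⟩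
    have := htri z a b
    linarith
  · intro x y hxy
    have hδ := hpos x y hxy
    obtain ⟨k, hk⟩ := exists_pow_lt_of_lt_one (by linarith : (0:ℝ) < ρ x y / 2)
      (by norm_num : (1/2 : ℝ) < 1)
    obtain ⟨n, α, hx⟩ := ruD_cover hself hdense x k
    have hj : ∀ (m : ℕ) (b : Bool), ∃ j, enc.symm j = (k, n, m, bif b then 0 else 1) :=
      fun m b => ⟨enc (k, n, m, bif b then 0 else 1), Equiv.symm_apply_apply _ _⟩
    by_cases hy : ∃ γ, y ∈ ruD ρ t k n γ
    · obtain ⟨γ, hyγ⟩ := hy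
      have hαγ : α ≠ γ := by
        rintro rfl
        have h1 := ruD_diam hsymm htri hx
        have h2 := ruD_diam hsymm htri hyγ
        have h3 := htri x (t α) y
        rw [hsymm (t α) y] at h3
        linarith
      have hcc : c α ≠ c γ := fun hcab => hαγ (hc hcab)
      obtain ⟨m, hm⟩ := Function.ne_iff.mp hcc
      obtain ⟨j, hjq⟩ := hj m (c α m)
      refine ⟨j, Or.inl ⟨?_, ?_⟩⟩
      · simp only [hjq, hbd, hFF]
        exact ⟨α, rfl, hx⟩
      · intro hmem
        simp only [hjq, hbd, hFF] at hmem
        obtain ⟨γ', hb', hyγ'⟩ := hmem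
        have hγγ : γ' = γ := by
          by_contra hne
          exact ruD_disjoint hsymm htri hne hyγ' hyγ
        subst hγγ
        exact hm hb'.symm
    · obtain ⟨j, hjq⟩ := hj 0 (c α 0)
      refine ⟨j, Or.inl ⟨?_, ?_⟩⟩
      · simp only [hjq, hbd, hFF]
        exact ⟨α, rfl, hx⟩
      · intro hmem
        simp only [hjq, hbd, hFF] at hmem
        obtain ⟨γ, -, hyγ⟩ := hmem
        exact hy ⟨γ, hyγ⟩

end CSepAux

namespace CSepGeo

variable {Y : Type u} [MetricSpace Y] (s : Set Y)

noncomputable def kurMap (x : Y) : ↥s → unitInterval := fun i =>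
  ⟨min (dist x (i : Y)) 1, Set.mem_Icc.mpr ⟨le_min dist_nonneg zero_le_one, min_le_right _ _⟩⟩

def kurK : Set (↥s → unitInterval) := closure (Set.range (kurMap s))

noncomputable def kurRho (φ ψ : ↥(kurK s)) : ℝ :=
  ⨆ i, |((φ.1 i : ℝ)) - ((ψ.1 i : ℝ))|

lemma kurRho_bdd (φ ψ : ↥(kurK s)) :
    BddAbove (Set.range fun i => |((φ.1 i : ℝ)) - ((ψ.1 i : ℝ))|) := by
  refine ⟨1, ?_⟩
  rintro r ⟨i, rfl⟩
  have h1 := (φ.1 i).2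
  have h2 := (ψ.1 i).2
  rw [Set.mem_Icc] at h1 h2
  rw [abs_le]
  constructor <;> linarith [h1.1, h1.2, h2.1, h2.2]

lemma min1_abs {a b d : ℝ} (h : |a - b| ≤ d) (ha : 0 ≤ a) (hb : 0 ≤ b) :
    |min a 1 - min b 1| ≤ min d 1 := by
  have hd : 0 ≤ d := le_trans (abs_nonneg _) h
  rw [abs_le] at h
  rcases min_cases a 1 with ⟨ea, h1⟩ | ⟨ea, h1⟩ <;> rcases min_cases b 1 with ⟨eb, h2⟩ | ⟨eb, h2⟩ <;>
    rcases min_cases d 1 with ⟨ed, h3⟩ | ⟨ed, h3⟩ <;> rw [ea, eb, ed] <;> rw [abs_le] <;>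
    constructor <;> linarith

lemma min1_add {a b d : ℝ} (h : d ≤ a + b) (ha : 0 ≤ a) (hb : 0 ≤ b) :
    min d 1 ≤ min a 1 + min b 1 := by
  rcases min_cases a 1 with ⟨ea, h1⟩ | ⟨ea, h1⟩ <;> rcases min_cases b 1 with ⟨eb, h2⟩ | ⟨eb, h2⟩ <;>
    rcases min_cases d 1 with ⟨ed, h3⟩ | ⟨ed, h3⟩ <;> rw [ea, eb, ed] <;> linarith

lemma kurK_pair (φ : ↥(kurK s)) (i j : ↥s) :
    |((φ.1 i : ℝ)) - ((φ.1 j : ℝ))| ≤ min (dist (i : Y) (j : Y)) 1 ∧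
      min (dist (i : Y) (j : Y)) 1 ≤ (φ.1 i : ℝ) + (φ.1 j : ℝ) := by
  have hsub : kurK s ⊆ ⋂ (i : ↥s), ⋂ (j : ↥s),
      ({ψ : ↥s → unitInterval | |((ψ i : ℝ)) - ((ψ j : ℝ))| ≤ min (dist (i : Y) (j : Y)) 1} ∩
        {ψ : ↥s → unitInterval | min (dist (i : Y) (j : Y)) 1 ≤ (ψ i : ℝ) + (ψ j : ℝ)}) := by
    apply closure_minimal
    · rintro _ ⟨x, rfl⟩
      simp only [Set.mem_iInter, Set.mem_inter_iff, Set.mem_setOf_eq]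
      intro i j
      have habs : |dist x (i : Y) - dist x (j : Y)| ≤ dist (i : Y) (j : Y) := by
        rw [dist_comm x (i : Y), dist_comm x (j : Y)]
        exact abs_dist_sub_le _ _ _
      have htr : dist (i : Y) (j : Y) ≤ dist x (i : Y) + dist x (j : Y) := by
        rw [dist_comm x (i : Y)]
        exact dist_triangle _ _ _
      exact ⟨min1_abs habs dist_nonneg dist_nonneg, min1_add htr dist_nonneg dist_nonneg⟩
    · apply isClosed_iInter
      intro i
      apply isClosed_iInter
      intro j
      have hci : Continuous fun ψ : ↥s → unitInterval => ((ψ i : ℝ)) :=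
        continuous_subtype_val.comp (continuous_apply i)
      have hcj : Continuous fun ψ : ↥s → unitInterval => ((ψ j : ℝ)) :=
        continuous_subtype_val.comp (continuous_apply j)
      exact IsClosed.inter (isClosed_le ((hci.sub hcj).abs) continuous_const)
        (isClosed_le continuous_const (hci.add hcj))
  have := hsub φ.2
  simp only [Set.mem_iInter, Set.mem_inter_iff, Set.mem_setOf_eq] at this
  exact this i j

lemma kurRho_le_coord [Nonempty ↥s] (φ ψ : ↥(kurK s)) (i0 : ↥s) :
    kurRho s φ ψ ≤ (φ.1 i0 : ℝ) + (ψ.1 i0 : ℝ) := by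
  apply ciSup_le
  intro i
  obtain ⟨h1, h2⟩ := kurK_pair s φ i i0
  obtain ⟨h3, h4⟩ := kurK_pair s ψ i i0
  have h5 := abs_sub_le ((φ.1 i : ℝ)) (min (dist (i : Y) (i0 : Y)) 1) ((ψ.1 i : ℝ))
  rw [abs_le] at h1 h3
  have h6 : |((φ.1 i : ℝ)) - min (dist (i : Y) (i0 : Y)) 1| ≤ (φ.1 i0 : ℝ) :=
    abs_le.mpr ⟨by linarith, by linarith⟩
  have h7 : |min (dist (i : Y) (i0 : Y)) 1 - ((ψ.1 i : ℝ))| ≤ (ψ.1 i0 : ℝ) :=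
    abs_le.mpr ⟨by linarith, by linarith⟩
  linarith

lemma kurRho_self [Nonempty ↥s] (φ : ↥(kurK s)) : kurRho s φ φ = 0 := by
  simp [kurRho]

lemma kurRho_comm (φ ψ : ↥(kurK s)) : kurRho s φ ψ = kurRho s ψ φ := by
  simp only [kurRho]
  exact iSup_congr fun i => abs_sub_comm _ _

lemma kurRho_coord_le (φ ψ : ↥(kurK s)) (i : ↥s) :
    |((φ.1 i : ℝ)) - ((ψ.1 i : ℝ))| ≤ kurRho s φ ψ :=
  le_ciSup (kurRho_bdd s φ ψ) i

lemma kurRho_triangle [Nonempty ↥s] (φ ψ χ : ↥(kurK s)) :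
    kurRho s φ χ ≤ kurRho s φ ψ + kurRho s ψ χ := by
  apply ciSup_le
  intro i
  exact le_trans (abs_sub_le _ _ _)
    (add_le_add (kurRho_coord_le s φ ψ i) (kurRho_coord_le s ψ χ i))

def kurM : Set ↥(kurK s) := {φ | ∀ ε : ℝ, 0 < ε → ∃ i, (φ.1 i : ℝ) < ε}

end CSepGeo


/-- Every metrizable space of density at most `𝔠` (i.e. having a dense
subset of cardinality at most the continuum) has countable separation. -/
theorem hasCountableSeparation_of_metrizable_density_le_continuum (X : Type u)
    [TopologicalSpace X] [TopologicalSpace.MetrizableSpace X]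
    (h : ∃ s : Set X, Dense s ∧ Cardinal.mk ↥s ≤ Cardinal.continuum.{u}) :
    HasCountableSeparation X := by
  unfold HasCountableSeparation SeparatesFrom
  classical
  rcases isEmpty_or_nonempty X with hX | hX
  · refine ⟨X, ‹TopologicalSpace X›, ?_, ?_, id, Topology.IsEmbedding.id, denseRange_id,
      fun _ => ∅, fun _ => isOpen_empty, fun x hx => isEmptyElim x⟩
    · exact ⟨by rw [Set.univ_eq_empty_iff.mpr hX]; exact isCompact_empty⟩
    · exact ⟨fun x => isEmptyElim x⟩
  · letI : MetricSpace X := TopologicalSpace.metrizableSpaceMetric X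
    obtain ⟨s, hsd, hscard⟩ := h
    haveI hne : Nonempty ↥s := (hsd.nonempty).to_subtype
    have harrow : (Cardinal.mk (ℕ → Bool)) = Cardinal.continuum.{0} := by
      simp [Cardinal.mk_arrow, Cardinal.two_power_aleph0]
    obtain ⟨emb⟩ : Nonempty (↥s ↪ ULift.{u} (ℕ → Bool)) := by
      rw [← Cardinal.le_def, Cardinal.mk_uLift, harrow, Cardinal.lift_continuum]
      exact hscard
    set c : ↥s → ℕ → Bool := fun i => (emb i).down with hcdef
    have hcinj : Function.Injective c := fun a b hab => emb.injective (ULift.down_injective hab)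
    set Kt := ↥(CSepGeo.kurK s) with hKt
    haveI : CompactSpace Kt := isCompact_iff_compactSpace.mp isClosed_closure.isCompact
    set e : X → Kt := fun x => ⟨CSepGeo.kurMap s x, subset_closure ⟨x, rfl⟩⟩ with he
    have hcoordsmall : ∀ (x : X) (ε : ℝ), 0 < ε → ∃ i : ↥s, ((CSepGeo.kurMap s x i : ℝ)) < ε := by
      intro x ε hε
      obtain ⟨b, hb, hdb⟩ := Metric.mem_closure_iff.mp (hsd x) ε hε
      exact ⟨⟨b, hb⟩, lt_of_le_of_lt (min_le_left _ _) hdb⟩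
    have heM : ∀ x : X, e x ∈ CSepGeo.kurM s := fun x ε hε => hcoordsmall x ε hε
    have hecont : Continuous e := by
      apply Continuous.subtype_mk
      apply continuous_pi
      intro i
      exact Continuous.subtype_mk ((continuous_id.dist continuous_const).min continuous_const) _
    have heinj : Function.Injective e := by
      intro x y hxy
      have hco : ∀ i : ↥s, min (dist x (i : X)) 1 = min (dist y (i : X)) 1 := by
        intro i
        exact congrArg Subtype.val (congrFun (congrArg Subtype.val hxy) i)
      by_contra hxyne
      have hpos : 0 < dist x y := dist_pos.mpr hxyne
      have hεpos : 0 < min (dist x y) 1 / 4 := by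
        have : (0:ℝ) < min (dist x y) 1 := lt_min hpos one_pos
        linarith
      obtain ⟨b, hb, hdb⟩ := Metric.mem_closure_iff.mp (hsd x) _ hεpos
      have hε1 : min (dist x y) 1 / 4 ≤ 1 / 4 := by
        have := min_le_right (dist x y) 1
        linarith
      have h1 : min (dist x b) 1 = dist x b := min_eq_left (by linarith)
      have h2 := hco ⟨b, hb⟩
      simp only [h1] at h2
      have h5 : min (dist y b) 1 = dist y b := by
        rcases min_cases (dist y b) 1 with ⟨hm, -⟩ | ⟨hm, -⟩
        · exact hm
        · rw [hm] at h2; linarith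
      rw [h5] at h2
      have htr : dist x y ≤ dist x b + dist b y := dist_triangle _ _ _
      rw [dist_comm b y, ← h2] at htr
      rcases min_cases (dist x y) 1 with ⟨hm, -⟩ | ⟨hm, hlt⟩ <;> rw [hm] at hεpos hε1 hdb <;>
        linarith
    have hemb : Topology.IsEmbedding e := by
      refine ⟨isInducing_iff_nhds.mpr fun x => le_antisymm
        (Filter.tendsto_iff_comap.mp (hecont.tendsto x)) ?_, heinj⟩
      rw [Filter.le_def]
      intro S hS
      rw [Metric.mem_nhds_iff] at hS
      obtain ⟨ε, hε, hball⟩ := hS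
      set ε' := min ε 1 with hε'
      have hε'pos : 0 < ε' := lt_min hε one_pos
      obtain ⟨b, hb, hdb⟩ := Metric.mem_closure_iff.mp (hsd x) (ε' / 4) (by linarith)
      refine Filter.mem_comap.mpr ⟨{ψ : Kt | ((ψ.1 ⟨b, hb⟩ : ℝ)) < ε' / 2}, ?_, ?_⟩
      · refine IsOpen.mem_nhds ?_ ?_
        · exact isOpen_lt (continuous_subtype_val.comp
            ((continuous_apply _).comp continuous_subtype_val)) continuous_const
        · show ((CSepGeo.kurMap s x ⟨b, hb⟩ : ℝ)) < ε' / 2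
          exact lt_of_le_of_lt (min_le_left _ _) (by linarith)
      · intro y hy
        have hy' : min (dist y b) 1 < ε' / 2 := hy
        have hyb : dist y b < ε' / 2 := by
          rcases min_cases (dist y b) 1 with ⟨hm, -⟩ | ⟨hm, -⟩
          · rwa [hm] at hy'
          · rw [hm] at hy'
            have : ε' ≤ 1 := min_le_right _ _
            linarith
        apply hball
        have : dist x y ≤ dist x b + dist b y := dist_triangle _ _ _
        rw [dist_comm b y] at this
        have hε'le : ε' ≤ ε := min_le_left _ _
        rw [Metric.mem_ball, dist_comm]
        linarith
    have hdr : DenseRange e := by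
      intro φ
      rw [_root_.mem_closure_iff]
      intro O hO hφO
      rw [Topology.IsInducing.subtypeVal.isOpen_iff] at hO
      obtain ⟨O', hO', rfl⟩ := hO
      have hφ : φ.1 ∈ closure (Set.range (CSepGeo.kurMap s)) := φ.2
      rw [_root_.mem_closure_iff] at hφ
      obtain ⟨ψ, hψO', x, rfl⟩ := hφ O' hO' hφO
      exact ⟨e x, hψO', ⟨x, rfl⟩⟩
    set A := ↥(CSepGeo.kurM s) with hA
    set ρA : A → A → ℝ := fun a b => CSepGeo.kurRho s a.1 b.1 with hρA
    set tA : ↥s → A := fun i => ⟨e (i : X), heM _⟩ with htA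
    have hzero : ∀ i : ↥s, ((CSepGeo.kurMap s (i : X) i : ℝ)) = 0 := by
      intro i
      show min (dist (i : X) (i : X)) 1 = 0
      simp
    obtain ⟨F, hFopen, hFsep⟩ := CSepAux.sep' ρA
      (fun a => CSepGeo.kurRho_self s a.1)
      (fun a b => CSepGeo.kurRho_comm s a.1 b.1)
      (fun a b c' => CSepGeo.kurRho_triangle s a.1 b.1 c'.1)
      (by
        intro a b hab
        have h1 : a.1 ≠ b.1 := fun hEq => hab (Subtype.ext hEq)
        have h2 : a.1.1 ≠ b.1.1 := fun hEq => h1 (Subtype.ext hEq)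
        obtain ⟨i, hi⟩ := Function.ne_iff.mp h2
        have hir : ((a.1.1 i : ℝ)) ≠ ((b.1.1 i : ℝ)) := fun hEq => hi (Subtype.ext hEq)
        exact lt_of_lt_of_le (abs_pos.mpr (sub_ne_zero.mpr hir))
          (CSepGeo.kurRho_coord_le s a.1 b.1 i))
      tA
      (by
        intro a ε hε
        obtain ⟨i, hi⟩ := a.2 (ε / 2) (by linarith)
        refine ⟨i, ?_⟩
        have hb := CSepGeo.kurRho_le_coord s a.1 (tA i).1 i
        have h0 : (((tA i).1.1 i : ℝ)) = 0 := hzero i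
        show CSepGeo.kurRho s a.1 (tA i).1 < ε
        rw [h0] at hb
        linarith)
      c hcinj
    have hTR : ∀ W : Set A, (∀ a ∈ W, ∃ ε, 0 < ε ∧ ∀ b, ρA a b < ε → b ∈ W) →
        ∃ V : Set Kt, IsOpen V ∧ ∀ m : A, (m.1 ∈ V ↔ m ∈ W) := by
      intro W hW
      set C : Set (A × ℝ × ↥s) := {p | p.1 ∈ W ∧ 0 < p.2.1 ∧ (∀ b, ρA p.1 b < p.2.1 → b ∈ W) ∧
        ((p.1.1.1 p.2.2 : ℝ) < p.2.1 / 8)} with hC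
      refine ⟨⋃ p ∈ C, {ψ : Kt | ((ψ.1 p.2.2 : ℝ)) < p.2.1 / 8}, ?_, ?_⟩
      · apply isOpen_biUnion
        intro p hp
        exact isOpen_lt (continuous_subtype_val.comp
          ((continuous_apply p.2.2).comp continuous_subtype_val)) continuous_const
      · intro m
        constructor
        · intro hm
          rw [Set.mem_iUnion₂] at hm
          obtain ⟨p, hp, hmp⟩ := hm
          obtain ⟨hpW, hpε, hpball, hpa⟩ := hp
          apply hpball m
          have hcoord := CSepGeo.kurRho_le_coord s p.1.1 m.1 p.2.2
          have hmp' : ((m.1.1 p.2.2 : ℝ)) < p.2.1 / 8 := hmp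
          show CSepGeo.kurRho s p.1.1 m.1 < p.2.1
          linarith
        · intro hm
          obtain ⟨ε, hε, hball⟩ := hW m hm
          obtain ⟨i, hi⟩ := m.2 (ε / 8) (by linarith)
          rw [Set.mem_iUnion₂]
          exact ⟨(m, ε, i), ⟨hm, hε, hball, hi⟩, hi⟩
    choose G hGopen hGiff using fun n => hTR (F n) (hFopen n)
    set Vm : ℕ → Set Kt := fun m => ⋃ i : ↥s, {ψ : Kt | ((ψ.1 i : ℝ)) < 1 / (m + 1)} with hVm
    have hVmopen : ∀ m, IsOpen (Vm m) := by
      intro m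
      apply isOpen_iUnion
      intro i
      exact isOpen_lt (continuous_subtype_val.comp
        ((continuous_apply i).comp continuous_subtype_val)) continuous_const
    refine ⟨Kt, inferInstance, inferInstance, inferInstance, e, hemb, hdr,
      fun j => if Even j then G (j / 2) else Vm (j / 2), ?_, ?_⟩
    · intro j
      by_cases hj : Even j
      · simp only [if_pos hj]; exact hGopen _
      · simp only [if_neg hj]; exact hVmopen _
    · rintro x ⟨x₀, rfl⟩ y hy
      by_cases hyM : y ∈ CSepGeo.kurM s
      · have hxM := heM x₀
        have hxyne : (⟨e x₀, hxM⟩ : A) ≠ ⟨y, hyM⟩ := by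
          intro hEq
          exact hy ⟨x₀, congrArg Subtype.val hEq⟩
        obtain ⟨n, hn⟩ := hFsep _ _ hxyne
        refine ⟨2 * n, ?_⟩
        have h2n : Even (2 * n) := even_two_mul n
        have hdiv : 2 * n / 2 = n := by omega
        simp only [if_pos h2n, hdiv]
        rcases hn with ⟨h1, h2⟩ | ⟨h1, h2⟩
        · exact Or.inl ⟨(hGiff n ⟨e x₀, hxM⟩).mpr h1,
            fun hcon => h2 ((hGiff n ⟨y, hyM⟩).mp hcon)⟩
        · exact Or.inr ⟨fun hcon => h1 ((hGiff n ⟨e x₀, hxM⟩).mp hcon),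
            (hGiff n ⟨y, hyM⟩).mpr h2⟩
      · rw [CSepGeo.kurM, Set.mem_setOf_eq] at hyM
        push_neg at hyM
        obtain ⟨ε, hε, hylb⟩ := hyM
        obtain ⟨m, hm⟩ := exists_nat_one_div_lt hε
        refine ⟨2 * m + 1, ?_⟩
        have hodd : ¬ Even (2 * m + 1) := by simp [Nat.even_add_one, parity_simps]
        have hdiv : (2 * m + 1) / 2 = m := by omega
        simp only [if_neg hodd, hdiv]
        left
        constructor
        · obtain ⟨i, hi⟩ := hcoordsmall x₀ (1 / (m + 1)) (by positivity)
          exact Set.mem_iUnion.mpr ⟨i, hi⟩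
        · intro hcon
          obtain ⟨i, hi⟩ := Set.mem_iUnion.mp hcon
          have h1 := hylb i
          have h2 : ((y.1 i : ℝ)) < 1 / (m + 1) := hi
          linarith
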